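/- Let T > 0, let ρ ∈ ℝ with ρ² < 1, let θ : [0, T] → ℝ be continuous, and let u : [0, T] → ℝ be a function with u(t) > 0 for all t ∈ [0, T] that satisfies the implicit relation (1 − ρ²)/u(t) − ρ²·log u(t) = 1 − ρ² + ∫_t^T θ(s)² ds for every t ∈ [0, T]. Then u(T) = 1 and, at every t ∈ [0, T], u is differentiable with derivative u′(t) = θ(t)² u(t)² / (1 − ρ² + ρ² u(t)). -/

import Mathlib

open Set intervalIntegral

/-- If `u > 0` on `[0, T]` satisfies the implicit relation
`(1 − ρ²)/u(t) − ρ² log u(t) = 1 − ρ² + ∫_t^T θ(s)² ds` on `[0, T]` (with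
`ρ² < 1` and `θ` continuous), then `u(T) = 1` and `u` solves the terminal-value
ODE `u′(t) = θ(t)² u(t)² / (1 − ρ² + ρ² u(t))` on `[0, T]`. -/
theorem implicit_relation_solves_value_ODE
    (T : ℝ) (hT : 0 < T) (ρ : ℝ) (hρ : ρ ^ 2 < 1)
    (θ : ℝ → ℝ) (hθ : ContinuousOn θ (Icc 0 T))
    (u : ℝ → ℝ) (hu : ∀ t ∈ Icc 0 T, 0 < u t)
    (hrel : ∀ t ∈ Icc 0 T,
      (1 - ρ ^ 2) / u t - ρ ^ 2 * Real.log (u t) =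
        1 - ρ ^ 2 + ∫ s in t..T, (θ s) ^ 2) :
    u T = 1 ∧
      ∀ t ∈ Icc 0 T,
        HasDerivWithinAt u ((θ t) ^ 2 * (u t) ^ 2 / (1 - ρ ^ 2 + ρ ^ 2 * u t))
          (Icc 0 T) t := by
  have h1ρ : 0 < 1 - ρ ^ 2 := by linarith
  set F : ℝ → ℝ := fun y => (1 - ρ ^ 2) / y - ρ ^ 2 * Real.log y with hFdef
  -- F is strictly antitone on (0, ∞)
  have hFanti : StrictAntiOn F (Ioi 0) := by
    intro x hx y hy hxy
    have h1 : (1 - ρ ^ 2) / y < (1 - ρ ^ 2) / x := div_lt_div_of_pos_left h1ρ hx hxy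
    have h2 : ρ ^ 2 * Real.log x ≤ ρ ^ 2 * Real.log y :=
      mul_le_mul_of_nonneg_left (Real.log_le_log hx hxy.le) (sq_nonneg ρ)
    simp only [hFdef]
    linarith
  have hInj : InjOn F (Ioi 0) := hFanti.injOn
  -- terminal value
  have hTmem : T ∈ Icc (0:ℝ) T := ⟨hT.le, le_refl T⟩
  have huT : u T = 1 := by
    have h := hrel T hTmem
    rw [intervalIntegral.integral_same] at h
    have hF1 : F (u T) = F 1 := by
      simp only [hFdef, Real.log_one, div_one]
      linarith
    exact hInj (hu T hTmem) (by norm_num) hF1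
  refine ⟨huT, ?_⟩
  -- strict derivative of F
  have hFderiv : ∀ x : ℝ, 0 < x →
      HasStrictDerivAt F (-(1 - ρ ^ 2 + ρ ^ 2 * x) / x ^ 2) x := by
    intro x hx
    have h1 : HasStrictDerivAt (fun y : ℝ => (1 - ρ ^ 2) / y)
        ((1 - ρ ^ 2) * (-(x ^ 2)⁻¹)) x := by
      simpa [div_eq_mul_inv] using (hasStrictDerivAt_inv hx.ne').const_mul (1 - ρ ^ 2)
    have h2 : HasStrictDerivAt (fun y : ℝ => ρ ^ 2 * Real.log y) (ρ ^ 2 * x⁻¹) x :=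
      (Real.hasStrictDerivAt_log hx.ne').const_mul (ρ ^ 2)
    have h3 := h1.sub h2
    refine h3.congr_deriv ?_
    field_simp
    ring
  -- integrability
  have hθ2 : ContinuousOn (fun s => θ s ^ 2) (Icc 0 T) := hθ.pow 2
  have hsub : ∀ a b : ℝ, a ∈ Icc 0 T → b ∈ Icc 0 T → uIcc a b ⊆ Icc 0 T := by
    intro a b ha hb
    rw [← uIcc_of_le hT.le]
    exact uIcc_subset_uIcc (by rwa [uIcc_of_le hT.le]) (by rwa [uIcc_of_le hT.le])
  have hint : ∀ a b : ℝ, a ∈ Icc 0 T → b ∈ Icc 0 T →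
      IntervalIntegrable (fun s => θ s ^ 2) MeasureTheory.volume a b := by
    intro a b ha hb
    exact (hθ2.mono (hsub a b ha hb)).intervalIntegrable
  intro t ht
  have hut : 0 < u t := hu t ht
  -- the function g
  set g : ℝ → ℝ := fun s => 1 - ρ ^ 2 + ∫ x in s..T, θ x ^ 2 with hgdef
  have hFg : ∀ s ∈ Icc 0 T, F (u s) = g s := fun s hs => hrel s hs
  -- derivative of g within Icc 0 T
  haveI : Fact (t ∈ Icc (0:ℝ) T) := ⟨ht⟩
  have hFTC : HasDerivWithinAt (fun s => ∫ x in (0:ℝ)..s, θ x ^ 2) (θ t ^ 2) (Icc 0 T) t :=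
    intervalIntegral.integral_hasDerivWithinAt_right (hint 0 t ⟨le_refl 0, hT.le⟩ ht)
      (hθ2.stronglyMeasurableAtFilter_nhdsWithin measurableSet_Icc t)
      (hθ2 t ht)
  have hgEq : ∀ s ∈ Icc 0 T, g s =
      (1 - ρ ^ 2 + ∫ x in (0:ℝ)..T, θ x ^ 2) - ∫ x in (0:ℝ)..s, θ x ^ 2 := by
    intro s hs
    have hadd := intervalIntegral.integral_add_adjacent_intervals
      (hint 0 s ⟨le_refl 0, hT.le⟩ hs) (hint s T hs hTmem)
    simp only [hgdef]
    linarith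
  have hgderiv : HasDerivWithinAt g (-(θ t ^ 2)) (Icc 0 T) t := by
    have h := (hasDerivWithinAt_const t (Icc 0 T)
      (1 - ρ ^ 2 + ∫ x in (0:ℝ)..T, θ x ^ 2)).sub hFTC
    rw [zero_sub] at h
    exact h.congr hgEq (hgEq t ht)
  -- local inverse of F at u t
  have hFd := hFderiv (u t) hut
  have hpos : 0 < 1 - ρ ^ 2 + ρ ^ 2 * u t := by
    have : 0 ≤ ρ ^ 2 * u t := mul_nonneg (sq_nonneg ρ) hut.le
    linarith
  have hne : -(1 - ρ ^ 2 + ρ ^ 2 * u t) / (u t) ^ 2 ≠ 0 := by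
    apply div_ne_zero
    · exact neg_ne_zero.mpr hpos.ne'
    · positivity
  set G : ℝ → ℝ := (hFd.hasStrictFDerivAt_equiv hne).localInverse F _ (u t) with hGdef
  have hGderiv : HasStrictDerivAt G (-(1 - ρ ^ 2 + ρ ^ 2 * u t) / (u t) ^ 2)⁻¹ (F (u t)) :=
    hFd.to_localInverse hne
  have hGF : G (F (u t)) = u t :=
    (hFd.hasStrictFDerivAt_equiv hne).localInverse_apply_image
  have hright : ∀ᶠ y in nhds (F (u t)), F (G y) = y :=
    (hFd.hasStrictFDerivAt_equiv hne).eventually_right_inverse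
  have hGpos : ∀ᶠ y in nhds (F (u t)), 0 < G y := by
    have hc : ContinuousAt G (F (u t)) := hGderiv.hasDerivAt.continuousAt
    have : {y : ℝ | 0 < G y} ∈ nhds (F (u t)) := by
      have := hc.preimage_mem_nhds (Ioi_mem_nhds (by rw [hGF]; exact hut))
      simpa [preimage, mem_Ioi] using this
    exact this
  -- g tends to F (u t) within Icc 0 T
  have hgt : g t = F (u t) := (hFg t ht).symm
  have hgtend : Filter.Tendsto g (nhdsWithin t (Icc 0 T)) (nhds (F (u t))) := by
    rw [← hgt]
    exact hgderiv.continuousWithinAt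
  -- eventually u = G ∘ g on Icc 0 T near t
  have hev : u =ᶠ[nhdsWithin t (Icc 0 T)] fun s => G (g s) := by
    filter_upwards [hgtend.eventually hright, hgtend.eventually hGpos,
      self_mem_nhdsWithin] with s h1 h2 hs
    have hFeq : F (G (g s)) = F (u s) := by rw [h1, hFg s hs]
    exact (hInj h2 (hu s hs) hFeq).symm
  have hut' : u t = G (g t) := by rw [hgt, hGF]
  -- chain rule
  have hcomp : HasDerivWithinAt (fun s => G (g s))
      ((-(1 - ρ ^ 2 + ρ ^ 2 * u t) / (u t) ^ 2)⁻¹ * (-(θ t ^ 2))) (Icc 0 T) t := by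
    have hG' : HasDerivAt G (-(1 - ρ ^ 2 + ρ ^ 2 * u t) / (u t) ^ 2)⁻¹ (g t) := by
      rw [hgt]
      exact hGderiv.hasDerivAt
    exact hG'.comp_hasDerivWithinAt t hgderiv
  have hval : (-(1 - ρ ^ 2 + ρ ^ 2 * u t) / (u t) ^ 2)⁻¹ * (-(θ t ^ 2)) =
      (θ t) ^ 2 * (u t) ^ 2 / (1 - ρ ^ 2 + ρ ^ 2 * u t) := by
    rw [inv_div]
    rw [div_mul_eq_mul_div, div_eq_div_iff (neg_ne_zero.mpr hpos.ne') hpos.ne']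
    ring
  rw [← hval]
  exact hcomp.congr_of_eventuallyEq hev hut'
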